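/- For every n ≥ 1, every multiindex β ∈ ℕ₀ⁿ, and every x ∈ ℝⁿ \ {0}: |(D^β f)(x)| ≤ β! · ((2n+2)/|x|)^{|β|} · e^{−|x|²/2}, where f(x) = e^{−|x|²}. -/

import Mathlib

open MeasureTheory Metric Real Finset

/-- The partial derivative `∂/∂xᵢ` of a function on `ℝⁿ` (Euclidean space). -/
noncomputable def partialDeriv {n : ℕ} {F : Type*} [NormedAddCommGroup F] [NormedSpace ℝ F]
    (i : Fin n) (f : EuclideanSpace ℝ (Fin n) → F) : EuclideanSpace ℝ (Fin n) → F :=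
  fun x => fderiv ℝ f x (EuclideanSpace.single i (1 : ℝ))

/-- The multiindex derivative `D^β = ∂^{β₁}_{x₁} ⋯ ∂^{βₙ}_{xₙ}`. -/
noncomputable def mderiv {n : ℕ} {F : Type*} [NormedAddCommGroup F] [NormedSpace ℝ F]
    (β : Fin n → ℕ) (f : EuclideanSpace ℝ (Fin n) → F) : EuclideanSpace ℝ (Fin n) → F :=
  (List.finRange n).foldr (fun i g => (partialDeriv i)^[β i] g) f

/-- The length `|β| = β₁ + ⋯ + βₙ` of a multiindex. -/
def msize {n : ℕ} (β : Fin n → ℕ) : ℕ := ∑ i, β i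

/-- The factorial `β! = β₁! ⋯ βₙ!` of a multiindex. -/
def mfactorial {n : ℕ} (β : Fin n → ℕ) : ℕ := ∏ i, (β i).factorial

open scoped ContDiff

noncomputable def G : ℂ → ℂ := fun z => Complex.exp (-z^2)

lemma G_diff : Differentiable ℂ G :=
  Complex.differentiable_exp.comp ((differentiable_pow 2).neg)

lemma G_iter_diff (k : ℕ) : Differentiable ℂ (iteratedDeriv k G) := by
  rw [iteratedDeriv_eq_iterate]
  exact ((G_diff.contDiff (n := ∞)).iterate_deriv k).differentiable (by simp)

lemma cauchy_est (f : ℂ → ℂ) (hf : Differentiable ℂ f) (c : ℂ) (R : NNReal) (hR : 0 < R)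
    (C : ℝ) (hC : ∀ z ∈ Metric.sphere c (R:ℝ), ‖f z‖ ≤ C) (k : ℕ) :
    ‖iteratedDeriv k f c‖ ≤ k.factorial * C / (R:ℝ)^k := by
  have h := hf.hasFPowerSeriesOnBall c hR
  have h1 : iteratedDeriv k f c = k.factorial • (cauchyPowerSeries f c R k fun _ => (1:ℂ)) := by
    rw [iteratedDeriv_eq_iteratedFDeriv, ← h.factorial_smul 1 k]
  have hC0 : 0 ≤ C := le_trans (norm_nonneg _) (hC (c + R) (by simp [hR.le]))
  have h2 : ‖cauchyPowerSeries f c R k fun _ => (1:ℂ)‖ ≤ C / (R:ℝ)^k := by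
    calc ‖cauchyPowerSeries f c R k fun _ => (1:ℂ)‖
        ≤ ‖cauchyPowerSeries f c R k‖ * ∏ _i : Fin k, ‖(1:ℂ)‖ :=
          (cauchyPowerSeries f c R k).le_opNorm _
      _ ≤ ((2 * π)⁻¹ * ∫ θ : ℝ in (0)..2 * π, ‖f (circleMap c R θ)‖) * |(R:ℝ)|⁻¹ ^ k := by
          simpa using norm_cauchyPowerSeries_le f c R k
      _ ≤ ((2 * π)⁻¹ * ∫ θ : ℝ in (0)..2 * π, C) * |(R:ℝ)|⁻¹ ^ k := by
          have : (∫ θ : ℝ in (0)..2 * π, ‖f (circleMap c R θ)‖) ≤ ∫ θ : ℝ in (0)..2 * π, C := by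
            refine intervalIntegral.integral_mono_on Real.two_pi_pos.le
              (((hf.continuous.norm).comp (continuous_circleMap c R)).intervalIntegrable _ _)
              (intervalIntegrable_const) (fun θ _ => hC _ (circleMap_mem_sphere c R.coe_nonneg θ))
          gcongr
      _ = C / (R:ℝ)^k := by
          rw [intervalIntegral.integral_const, abs_of_nonneg R.coe_nonneg]
          have hR' : (R:ℝ) ≠ 0 := NNReal.coe_ne_zero.mpr hR.ne'
          simp only [sub_zero, smul_eq_mul]
          field_simp
          rw [one_div, inv_pow, mul_assoc, inv_mul_cancel₀ (pow_ne_zero _ hR'), mul_one]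
  calc ‖iteratedDeriv k f c‖ = k.factorial * ‖cauchyPowerSeries f c R k fun _ => (1:ℂ)‖ := by
        rw [h1]; simp [norm_smul]
    _ ≤ k.factorial * (C / (R:ℝ)^k) := by gcongr
    _ = k.factorial * C / (R:ℝ)^k := by ring

noncomputable def g1 (k : ℕ) : ℝ → ℝ := iteratedDeriv k (fun t => Real.exp (-t^2))

lemma g1_eq_re (k : ℕ) (t : ℝ) : g1 k t = (iteratedDeriv k G t).re := by
  induction k generalizing t with
  | zero =>
    simp only [g1, iteratedDeriv_zero, G]
    rw [show -(t:ℂ)^2 = ((-t^2 : ℝ) : ℂ) by push_cast; ring, Complex.exp_ofReal_re]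
  | succ k ih =>
    have hfun : g1 k = fun s : ℝ => (iteratedDeriv k G s).re := funext ih
    have hd : HasDerivAt (iteratedDeriv k G) (iteratedDeriv (k+1) G t) (t:ℂ) := by
      rw [iteratedDeriv_succ]
      exact ((G_iter_diff k) (t:ℂ)).hasDerivAt
    have := hd.real_of_complex
    simp only [g1, iteratedDeriv_succ] at *
    rw [hfun]
    exact this.deriv

lemma g1_contDiff (k : ℕ) : ContDiff ℝ ∞ (g1 k) := by
  have h : ContDiff ℝ ∞ (fun t : ℝ => Real.exp (-t^2)) :=
    Real.contDiff_exp.comp (ContDiff.pow contDiff_id 2).neg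
  rw [g1, iteratedDeriv_eq_iterate]
  exact h.iterate_deriv k

lemma g1_succ (k : ℕ) : g1 (k+1) = deriv (g1 k) := iteratedDeriv_succ

/-- Per-coordinate bound from Cauchy estimates. -/
lemma g1_bound (k : ℕ) (t : ℝ) (ρ : NNReal) (hρ : 0 < ρ) :
    |g1 k t| ≤ k.factorial * Real.exp (-(3/5)*t^2 + (3/2)*(ρ:ℝ)^2) / (ρ:ℝ)^k := by
  have hC : ∀ z ∈ Metric.sphere (t:ℂ) (ρ:ℝ), ‖G z‖ ≤ Real.exp (-(3/5)*t^2 + (3/2)*(ρ:ℝ)^2) := by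
    intro z hz
    rw [Metric.mem_sphere, Complex.dist_eq] at hz
    have hre : (z - t).re ^ 2 + (z - t).im ^ 2 = (ρ:ℝ)^2 := by
      have h2 : ‖z - t‖ ^ 2 = (ρ:ℝ)^2 := by rw [hz]
      rw [Complex.sq_norm, Complex.normSq_apply] at h2
      rw [← h2]; ring
    set u := (z - t).re with hu
    set v := (z - t).im with hv
    have hzre : z.re = t + u := by simp [hu]
    have hzim : z.im = v := by simp [hv]
    rw [G, Complex.norm_exp]
    apply Real.exp_le_exp.2
    have h1 : (-z^2).re = v^2 - (t + u)^2 := by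
      simp only [Complex.neg_re, pow_two, Complex.mul_re, hzre, hzim]
      ring
    rw [h1]
    have hu2 : u^2 ≤ (ρ:ℝ)^2 := by nlinarith [sq_nonneg v]
    have hv2 : v^2 = (ρ:ℝ)^2 - u^2 := by linarith
    rw [hv2]
    nlinarith [sq_nonneg (2*t + 5*u)]
  have := cauchy_est G G_diff t ρ hρ _ hC k
  calc |g1 k t| = |(iteratedDeriv k G t).re| := by rw [g1_eq_re]
    _ ≤ ‖iteratedDeriv k G t‖ := Complex.abs_re_le_norm _
    _ ≤ _ := this

/-- The product function `y ↦ ∏ i, g1 (c i) (y i)`. -/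
noncomputable def Pfun {n : ℕ} (c : Fin n → ℕ) : EuclideanSpace ℝ (Fin n) → ℝ :=
  fun y => ∏ i, g1 (c i) (y i)

lemma Pfun_congr {n : ℕ} {c c' : Fin n → ℕ} (h : ∀ j, c j = c' j) : Pfun c = Pfun c' := by
  rw [show c = c' from funext h]

lemma hasFDerivAt_Pfun {n : ℕ} (c : Fin n → ℕ) (y : EuclideanSpace ℝ (Fin n)) :
    HasFDerivAt (Pfun c)
      (∑ i, (∏ j ∈ univ.erase i, g1 (c j) (y j)) •
        ((deriv (g1 (c i)) (y i)) • (EuclideanSpace.proj i : EuclideanSpace ℝ (Fin n) →L[ℝ] ℝ))) y := by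
  apply HasFDerivAt.finset_prod
  intro i _
  have hg : HasDerivAt (g1 (c i)) (deriv (g1 (c i)) (y i)) (y i) :=
    (((g1_contDiff (c i)).differentiable (by simp)) (y i)).hasDerivAt
  exact hg.comp_hasFDerivAt y
    ((EuclideanSpace.proj (𝕜 := ℝ) i).hasFDerivAt (x := y))

lemma partialDeriv_Pfun {n : ℕ} (c : Fin n → ℕ) (i : Fin n) :
    partialDeriv i (Pfun c) = Pfun (Function.update c i (c i + 1)) := by
  funext y
  rw [partialDeriv, (hasFDerivAt_Pfun c y).fderiv]
  rw [ContinuousLinearMap.sum_apply]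
  have hterm : ∀ j : Fin n, ((∏ k ∈ univ.erase j, g1 (c k) (y k)) •
      ((deriv (g1 (c j)) (y j)) • (EuclideanSpace.proj j : EuclideanSpace ℝ (Fin n) →L[ℝ] ℝ)))
        (EuclideanSpace.single i 1)
      = (∏ k ∈ univ.erase j, g1 (c k) (y k)) * deriv (g1 (c j)) (y j) * (if j = i then 1 else 0) := by
    intro j
    simp [EuclideanSpace.single_apply, mul_assoc, eq_comm]
  rw [Finset.sum_congr rfl (fun j _ => hterm j)]
  rw [Finset.sum_eq_single i]
  · rw [if_pos rfl, mul_one, Pfun]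
    rw [← Finset.mul_prod_erase univ _ (mem_univ i)]
    rw [Function.update_self, ← g1_succ, mul_comm]
    congr 1
    exact Finset.prod_congr rfl (fun k hk => by
      rw [Function.update_of_ne (Finset.ne_of_mem_erase hk)])
  · intro j _ hj
    rw [if_neg hj, mul_zero]
  · intro h; exact absurd (mem_univ i) h

lemma iter_partialDeriv_Pfun {n : ℕ} (c : Fin n → ℕ) (i : Fin n) (m : ℕ) :
    (partialDeriv i)^[m] (Pfun c) = Pfun (fun j => if j = i then c i + m else c j) := by
  induction m with
  | zero =>
    simp only [Function.iterate_zero, id_eq]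
    exact Pfun_congr (fun j => by split <;> simp_all)
  | succ m ih =>
    rw [Function.iterate_succ_apply', ih, partialDeriv_Pfun]
    apply Pfun_congr
    intro j
    rcases eq_or_ne j i with rfl | hj
    · simp [Function.update_self]; ring
    · simp [Function.update_of_ne hj, hj]

lemma foldr_Pfun {n : ℕ} (β : Fin n → ℕ) (l : List (Fin n)) (c : Fin n → ℕ) :
    List.foldr (fun i g => (partialDeriv i)^[β i] g) (Pfun c) l
      = Pfun (fun j => c j + β j * l.count j) := by
  induction l generalizing c with
  | nil => exact Pfun_congr (fun j => by simp)
  | cons i l' ih =>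
    rw [List.foldr_cons, ih, iter_partialDeriv_Pfun]
    apply Pfun_congr
    intro j
    rcases eq_or_ne j i with rfl | hj
    · rw [if_pos rfl, List.count_cons_self]; ring
    · rw [if_neg hj, List.count_cons_of_ne hj.symm]

lemma mderiv_eq_Pfun {n : ℕ} (β : Fin n → ℕ) :
    mderiv β (Pfun (fun _ => 0)) = Pfun β := by
  rw [mderiv, foldr_Pfun]
  exact Pfun_congr (fun j => by
    rw [List.count_eq_one_of_mem (List.nodup_finRange n) (List.mem_finRange j)]
    simp)

/-- for `f(x) = e^{-|x|²}` on `ℝⁿ`, `n ≥ 1`, every multiindex `β` and `x ≠ 0`,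
`|D^β f (x)| ≤ β! ((2n+2)/|x|)^{|β|} e^{-|x|²/2}`. -/
theorem statement8 (n : ℕ) (hn : 1 ≤ n) (β : Fin n → ℕ)
    (x : EuclideanSpace ℝ (Fin n)) (hx : x ≠ 0) :
    |mderiv β (fun y => Real.exp (-‖y‖ ^ 2)) x|
      ≤ (mfactorial β : ℝ) * ((2 * n + 2) / ‖x‖) ^ (msize β) * Real.exp (-‖x‖ ^ 2 / 2) := by
  have hnorm : ∀ y : EuclideanSpace ℝ (Fin n), ‖y‖^2 = ∑ i, (y i)^2 := by
    intro y
    rw [EuclideanSpace.norm_eq, Real.sq_sqrt (by positivity)]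
    simp [Real.norm_eq_abs, sq_abs]
  have hfe : (fun y : EuclideanSpace ℝ (Fin n) => Real.exp (-‖y‖ ^ 2))
      = Pfun (fun _ => 0) := by
    funext y
    rw [hnorm y, Pfun]
    simp only [g1, iteratedDeriv_zero]
    rw [← Real.exp_sum]
    congr 1
    rw [← Finset.sum_neg_distrib]
  rw [hfe, mderiv_eq_Pfun]
  have hx0 : (0:ℝ) < ‖x‖ := norm_pos_iff.mpr hx
  set r : ℝ := ‖x‖ with hr
  have hρr : (0:ℝ) < r / (2*n+2) := by positivity
  set ρ : NNReal := ⟨r / (2*n+2), hρr.le⟩ with hρdef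
  have hρpos : 0 < ρ := by exact NNReal.coe_pos.mp hρr
  have hρc : (ρ:ℝ) = r / (2*n+2) := rfl
  have hρinv : (ρ:ℝ)⁻¹ = (2*n+2) / r := by rw [hρc, inv_div]
  have step1 : |Pfun β x| ≤ ∏ i, |g1 (β i) (x i)| := by
    rw [Pfun, Finset.abs_prod]
  have step2 : ∏ i, |g1 (β i) (x i)|
      ≤ ∏ i, (((β i).factorial : ℝ) *
          Real.exp (-(3/5)*(x i)^2 + (3/2)*(ρ:ℝ)^2) * ((ρ:ℝ)⁻¹)^(β i)) := by
    apply Finset.prod_le_prod (fun i _ => abs_nonneg _)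
    intro i _
    have := g1_bound (β i) (x i) ρ hρpos
    calc |g1 (β i) (x i)| ≤ (β i).factorial *
        Real.exp (-(3/5)*(x i)^2 + (3/2)*(ρ:ℝ)^2) / (ρ:ℝ)^(β i) := this
      _ = ((β i).factorial : ℝ) *
          Real.exp (-(3/5)*(x i)^2 + (3/2)*(ρ:ℝ)^2) * ((ρ:ℝ)⁻¹)^(β i) := by
        rw [div_eq_mul_inv, inv_pow]
  have step3 : ∏ i, (((β i).factorial : ℝ) *
        Real.exp (-(3/5)*(x i)^2 + (3/2)*(ρ:ℝ)^2) * ((ρ:ℝ)⁻¹)^(β i))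
      = (mfactorial β : ℝ) * Real.exp (-(3/5)*r^2 + n*((3/2)*(ρ:ℝ)^2))
          * ((ρ:ℝ)⁻¹)^(msize β) := by
    rw [Finset.prod_mul_distrib, Finset.prod_mul_distrib]
    congr 1
    · congr 1
      · rw [mfactorial, Nat.cast_prod]
      · rw [← Real.exp_sum]
        congr 1
        rw [Finset.sum_add_distrib, ← Finset.mul_sum, hnorm x, Finset.sum_const]
        simp [mul_comm]
    · rw [Finset.prod_pow_eq_pow_sum, msize]
  have hexp : Real.exp (-(3/5)*r^2 + n*((3/2)*(ρ:ℝ)^2)) ≤ Real.exp (-r^2/2) := by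
    apply Real.exp_le_exp.2
    rw [hρc, div_pow]
    have h2 : (0:ℝ) < (2*(n:ℝ)+2)^2 := by positivity
    have e : (n:ℝ) * (3/2 * (r^2/(2*(n:ℝ)+2)^2)) = (3/2*(n:ℝ)*r^2)/(2*(n:ℝ)+2)^2 := by ring
    have key : (n:ℝ) * (3/2 * (r^2/(2*(n:ℝ)+2)^2)) ≤ r^2/10 := by
      rw [e, div_le_iff₀ h2]
      nlinarith [mul_nonneg (sq_nonneg r) (sq_nonneg ((n:ℝ)-1)), mul_nonneg (sq_nonneg r) (Nat.cast_nonneg (α := ℝ) n)]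
    linarith [key]
  calc |Pfun β x| ≤ ∏ i, |g1 (β i) (x i)| := step1
    _ ≤ _ := step2
    _ = _ := step3
    _ ≤ (mfactorial β : ℝ) * Real.exp (-r^2/2) * ((ρ:ℝ)⁻¹)^(msize β) := by
        apply mul_le_mul_of_nonneg_right _ (by positivity)
        exact mul_le_mul_of_nonneg_left hexp (by positivity)
    _ = (mfactorial β : ℝ) * ((2 * n + 2) / ‖x‖) ^ (msize β) * Real.exp (-‖x‖ ^ 2 / 2) := by
        rw [hρinv, ← hr]
        ring
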